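/- The Boolean family of semantic structures. For each natural number k < 128, define s_k as follows: value type Bool, address set ℕ, size 1, encoding s_k.to_byte false = [2k] and s_k.to_byte true = [2k+1], and decoding s_k.from_byte [2k] = some false, s_k.from_byte [2k+1] = some true, and s_k.from_byte bl = none for every other byte list bl. Then (i) each s_k is a semantic structure, i.e., satisfies the length law and the decode-after-encode law; and (ii) for every byte list bl there exists k < 128 with s_k.from_byte bl = none. In particular, no fixed byte value (and no fixed byte list) lies in the domain of definedness of every s_k.from_byte, so any modification writing a fixed constant byte at the address of a Boolean variable is detected by some member of the family. -/

import Mathlib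

/-- Bytes are `Fin 256`. -/
abbrev Byte := Fin 256

open Fin.NatCast

/-- Encoding of the `k`-th Boolean semantic structure:
`false ↦ [2k]`, `true ↦ [2k+1]`. -/
def boolToByte (k : ℕ) : Bool → List Byte :=
  fun b => if b then [((2 * k + 1 : ℕ) : Byte)] else [((2 * k : ℕ) : Byte)]

/-- Decoding of the `k`-th Boolean semantic structure: defined exactly on
`[2k] ↦ false` and `[2k+1] ↦ true`, `none` on every other byte list. -/
def boolFromByte (k : ℕ) : List Byte → Option Bool :=
  fun bl =>
    if bl = [((2 * k : ℕ) : Byte)] then some false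
    else if bl = [((2 * k + 1 : ℕ) : Byte)] then some true
    else none

/-- The Boolean family of semantic structures: (i) each `s_k` (size 1,
address set ℕ) satisfies the length law and the decode-after-encode law;
(ii) for every byte list `bl` some member of the family is undefined on `bl`,
so no fixed byte list lies in the domain of every `s_k.from_byte`. -/
theorem boolean_family :
    (∀ k : ℕ, k < 128 →
      (∀ v : Bool, (boolToByte k v).length = 1) ∧
      (∀ v : Bool, boolFromByte k (boolToByte k v) = some v)) ∧
    (∀ bl : List Byte, ∃ k : ℕ, k < 128 ∧ boolFromByte k bl = none) := by
  constructor
  · intro k hk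
    have h1 : 2 * k + 1 < 256 := by omega
    have h0 : 2 * k < 256 := by omega
    have hne : ((2 * k : ℕ) : Byte) ≠ ((2 * k + 1 : ℕ) : Byte) := by
      intro h
      have := congrArg Fin.val h
      rw [Fin.val_natCast, Fin.val_natCast, Nat.mod_eq_of_lt h0,
        Nat.mod_eq_of_lt h1] at this
      omega
    refine ⟨fun v => ?_, fun v => ?_⟩
    · cases v <;> simp [boolToByte]
    · cases v <;> simp [boolToByte, boolFromByte, hne, hne.symm]
  · intro bl
    match bl with
    | [] => exact ⟨0, by norm_num, by simp [boolFromByte]⟩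
    | a :: b :: t => exact ⟨0, by norm_num, by simp [boolFromByte]⟩
    | [b] =>
      refine ⟨if b.val / 2 = 0 then 1 else 0, by split <;> norm_num, ?_⟩
      have hb := b.isLt
      by_cases h : b.val / 2 = 0
      · have h2 : b.val < 2 := by omega
        simp only [h, if_true, boolFromByte]
        have e2 : (((2 * 1 : ℕ) : Byte)).val = 2 := by decide
        have e3 : (((2 * 1 + 1 : ℕ) : Byte)).val = 3 := by decide
        rw [if_neg, if_neg]
        · intro he
          have : b.val = 3 := by rw [List.cons_eq_cons] at he; rw [he.1]; exact e3
          omega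
        · intro he
          have : b.val = 2 := by rw [List.cons_eq_cons] at he; rw [he.1]; exact e2
          omega
      · have h2 : 2 ≤ b.val := by omega
        simp only [h, if_false, boolFromByte]
        have e0 : (((2 * 0 : ℕ) : Byte)).val = 0 := by decide
        have e1 : (((2 * 0 + 1 : ℕ) : Byte)).val = 1 := by decide
        rw [if_neg, if_neg]
        · intro he
          have : b.val = 1 := by rw [List.cons_eq_cons] at he; rw [he.1]; exact e1
          omega
        · intro he
          have : b.val = 0 := by rw [List.cons_eq_cons] at he; rw [he.1]; exact e0
          omega
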